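/- For every set Γ and 1 < p < ∞, the compact space B(Γ) = {x ∈ [-1,1]^Γ : ∑_γ |x_γ| ≤ 1} (equivalently, the unit ball of ℓ_p(Γ) in its weak topology) is a continuous image of σ_1(Γ)^ℕ. -/

import Mathlib

open scoped ENNReal

noncomputable section Stmt12Aux

namespace Stmt12



variable {Γ : Type*}

abbrev Sig (Γ : Type*) := {x : Γ → Bool // {γ | x γ = true}.encard ≤ 1}

abbrev XX (Γ : Type*) := (ℕ → Sig Γ) × (ℕ → Bool) × (ℕ → ℕ → Bool)

/-! ### tsum helpers -/

theorem summable_of_unique {f : ℕ → ℝ}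
    (h : ∀ m n, f m ≠ 0 → f n ≠ 0 → m = n) : Summable f := by
  by_cases hz : ∀ n, f n = 0
  · exact summable_of_ne_finset_zero (s := ∅) (fun n _ => hz n)
  · push_neg at hz
    obtain ⟨n₀, h₀⟩ := hz
    refine summable_of_ne_finset_zero (s := {n₀}) (fun n hn => ?_)
    by_contra hfn
    exact hn (by simpa using h n n₀ hfn h₀)

theorem tsum_of_unique {f : ℕ → ℝ}
    (h : ∀ m n, f m ≠ 0 → f n ≠ 0 → m = n) :
    (∀ n, f n = 0) ∨ ∃ n₀, (∑' n, f n) = f n₀ := by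
  by_cases hz : ∀ n, f n = 0
  · exact Or.inl hz
  · push_neg at hz
    obtain ⟨n₀, h₀⟩ := hz
    refine Or.inr ⟨n₀, tsum_eq_single n₀ (fun m hm => ?_)⟩
    by_contra hfm
    exact hm (h m n₀ hfm h₀)

theorem abs_tsum_le_of_unique {f : ℕ → ℝ} {c : ℝ} (hc : 0 ≤ c)
    (h : ∀ m n, f m ≠ 0 → f n ≠ 0 → m = n) (hb : ∀ n, |f n| ≤ c) :
    |∑' n, f n| ≤ c := by
  rcases tsum_of_unique h with h0 | ⟨n₀, hn₀⟩
  · have hf : f = fun _ => 0 := funext h0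
    simp only [hf, tsum_zero, abs_zero]
    exact hc
  · rw [hn₀]; exact hb n₀

/-! ### binary values -/

def bterm (c : ℕ → Bool) (k : ℕ) : ℝ := if c k then (2⁻¹ : ℝ) ^ (k+1) else 0

theorem pow_summable : Summable (fun k : ℕ => (2⁻¹ : ℝ) ^ (k+1)) := by
  have := (summable_geometric_of_lt_one (by norm_num : (0:ℝ) ≤ 2⁻¹)
    (by norm_num : (2⁻¹:ℝ) < 1)).mul_left 2⁻¹
  simpa [pow_succ'] using this

theorem tsum_pow_eq_one : ∑' k : ℕ, (2⁻¹ : ℝ) ^ (k+1) = 1 := by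
  have h := tsum_geometric_of_lt_one (by norm_num : (0:ℝ) ≤ 2⁻¹)
    (by norm_num : (2⁻¹:ℝ) < 1)
  calc ∑' k : ℕ, (2⁻¹:ℝ)^(k+1) = ∑' k : ℕ, 2⁻¹ * (2⁻¹:ℝ)^k := by
        simp [pow_succ']
  _ = 2⁻¹ * ∑' k : ℕ, (2⁻¹:ℝ)^k := tsum_mul_left
  _ = 1 := by rw [h]; norm_num

theorem bterm_nonneg (c : ℕ → Bool) (k : ℕ) : 0 ≤ bterm c k := by
  unfold bterm; split
  · positivity
  · exact le_rfl

theorem bterm_le (c : ℕ → Bool) (k : ℕ) : bterm c k ≤ (2⁻¹:ℝ)^(k+1) := by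
  unfold bterm; split
  · exact le_rfl
  · positivity

theorem bterm_summable (c : ℕ → Bool) : Summable (bterm c) :=
  Summable.of_nonneg_of_le (bterm_nonneg c) (bterm_le c) pow_summable

def binVal (c : ℕ → Bool) : ℝ := ∑' k, bterm c k

theorem binVal_nonneg (c : ℕ → Bool) : 0 ≤ binVal c :=
  tsum_nonneg (bterm_nonneg c)

theorem binVal_le_one (c : ℕ → Bool) : binVal c ≤ 1 :=
  (Summable.tsum_le_tsum (bterm_le c) (bterm_summable c) pow_summable).trans tsum_pow_eq_one.le


theorem binVal_tail_bound (c : ℕ → Bool) (K : ℕ) :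
    |binVal c - ∑ k ∈ Finset.range K, bterm c k| ≤ (2⁻¹:ℝ)^K := by
  have hs := bterm_summable c
  have h := hs.sum_add_tsum_nat_add K
  have htail : binVal c - ∑ k ∈ Finset.range K, bterm c k = ∑' k, bterm c (k + K) := by
    rw [binVal, ← h]; ring
  rw [htail]
  have hsum2 : Summable (fun k => bterm c (k + K)) := (summable_nat_add_iff K).2 hs
  have hsum3 : Summable (fun k : ℕ => (2⁻¹:ℝ) ^ (k + K + 1)) := by
    simpa using (summable_nat_add_iff K).2 pow_summable
  rw [abs_of_nonneg (tsum_nonneg (fun k => bterm_nonneg c _))]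
  calc (∑' k, bterm c (k + K)) ≤ ∑' k : ℕ, (2⁻¹:ℝ)^(k + K + 1) :=
        Summable.tsum_le_tsum (fun k => bterm_le c _) hsum2 hsum3
  _ = (2⁻¹:ℝ)^K * ∑' k : ℕ, (2⁻¹:ℝ)^(k+1) := by
        rw [← tsum_mul_left]
        congr 1; funext k; rw [← pow_add]; ring_nf
  _ = (2⁻¹:ℝ)^K := by rw [tsum_pow_eq_one, mul_one]

theorem continuous_binVal : Continuous binVal := by
  have hcont : ∀ K : ℕ, Continuous (fun c : ℕ → Bool => ∑ k ∈ Finset.range K, bterm c k) := by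
    intro K
    refine continuous_finset_sum _ (fun k _ => ?_)
    have : (fun c : ℕ → Bool => bterm c k) =
        (fun b : Bool => if b then (2⁻¹:ℝ)^(k+1) else 0) ∘ (fun c : ℕ → Bool => c k) := rfl
    rw [this]
    exact (continuous_of_discreteTopology).comp (continuous_apply k)
  refine TendstoUniformly.continuous (p := (Filter.atTop : Filter ℕ))
    (F := fun K (c : ℕ → Bool) => ∑ k ∈ Finset.range K, bterm c k)
    ?_ (Filter.Eventually.of_forall hcont).frequently
  rw [Metric.tendstoUniformly_iff]
  intro ε hε
  obtain ⟨K₀, hK₀⟩ := exists_pow_lt_of_lt_one hε (by norm_num : (2⁻¹:ℝ) < 1)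
  filter_upwards [Filter.eventually_ge_atTop K₀] with K hK c
  have h1 : (2⁻¹:ℝ)^K ≤ (2⁻¹:ℝ)^K₀ :=
    pow_le_pow_of_le_one (by norm_num) (by norm_num) hK
  calc dist (binVal c) (∑ k ∈ Finset.range K, bterm c k)
      = |binVal c - ∑ k ∈ Finset.range K, bterm c k| := by rw [Real.dist_eq]
  _ ≤ (2⁻¹:ℝ)^K := binVal_tail_bound c K
  _ ≤ (2⁻¹:ℝ)^K₀ := h1
  _ < ε := hK₀

theorem binVal_surj {t : ℝ} (h0 : 0 ≤ t) (h1 : t ≤ 1) : ∃ c : ℕ → Bool, binVal c = t := by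
  classical
  let r : ℕ → ℝ := fun k => Nat.rec (motive := fun _ => ℝ) t
    (fun k (rk : ℝ) => rk - (if (2⁻¹:ℝ)^(k+1) ≤ rk then (2⁻¹:ℝ)^(k+1) else 0)) k
  have hr0 : r 0 = t := rfl
  have hrstep : ∀ k, r (k+1) = r k - (if (2⁻¹:ℝ)^(k+1) ≤ r k then (2⁻¹:ℝ)^(k+1) else 0) :=
    fun k => rfl
  have hinv : ∀ k, 0 ≤ r k ∧ r k ≤ (2⁻¹:ℝ)^k := by
    intro k; induction k with
    | zero => exact ⟨h0, by simpa [hr0] using h1⟩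
    | succ k ih =>
      rw [hrstep k]
      by_cases hc : (2⁻¹:ℝ)^(k+1) ≤ r k
      · rw [if_pos hc]
        constructor
        · linarith
        · have : r k ≤ (2⁻¹:ℝ)^k := ih.2
          have hp : (2⁻¹:ℝ)^k = 2 * (2⁻¹:ℝ)^(k+1) := by ring
          linarith [this, hp ▸ this]
      · rw [if_neg hc]
        push_neg at hc
        exact ⟨by linarith [ih.1], by simpa using hc.le⟩
  let c : ℕ → Bool := fun k => if (2⁻¹:ℝ)^(k+1) ≤ r k then true else false
  have hbt : ∀ k, bterm c k = r k - r (k+1) := by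
    intro k
    rw [hrstep k]
    unfold bterm
    simp only [c]
    by_cases hc : (2⁻¹:ℝ)^(k+1) ≤ r k
    · simp [hc]
    · simp [hc]
  have hpartial : ∀ K, ∑ k ∈ Finset.range K, bterm c k = t - r K := by
    intro K; induction K with
    | zero => simp [hr0]
    | succ K ih => rw [Finset.sum_range_succ, ih, hbt K]; ring
  refine ⟨c, ?_⟩
  have hhs : HasSum (bterm c) (binVal c) := (bterm_summable c).hasSum
  have h2 : Filter.Tendsto (fun K => ∑ k ∈ Finset.range K, bterm c k)
      Filter.atTop (nhds (binVal c)) := hhs.tendsto_sum_nat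
  have h3 : Filter.Tendsto (fun K => ∑ k ∈ Finset.range K, bterm c k)
      Filter.atTop (nhds t) := by
    have hrt : Filter.Tendsto r Filter.atTop (nhds 0) := by
      refine squeeze_zero (fun k => (hinv k).1) (fun k => (hinv k).2) ?_
      exact tendsto_pow_atTop_nhds_zero_of_lt_one (by norm_num) (by norm_num)
    have : Filter.Tendsto (fun K => t - r K) Filter.atTop (nhds (t - 0)) :=
      (tendsto_const_nhds).sub hrt
    simpa [hpartial] using this
  exact tendsto_nhds_unique h2 h3


section AuxW


/-- recursion producing (w n, T (n+1)) from u -/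
def auxw (u : ℕ → ℝ) : ℕ → ℝ × ℝ
  | 0 => (u 0, 1 - u 0)
  | n+1 => (u (n+1) * min (auxw u n).1 (auxw u n).2,
      (auxw u n).2 - u (n+1) * min (auxw u n).1 (auxw u n).2)

variable {u : ℕ → ℝ} (hu : ∀ n, 0 ≤ u n ∧ u n ≤ 1)

include hu

theorem auxw_inv : ∀ n, 0 ≤ (auxw u n).1 ∧ 0 ≤ (auxw u n).2 := by
  intro n; induction n with
  | zero => exact ⟨(hu 0).1, by have := (hu 0).2; simp [auxw]; linarith⟩
  | succ n ih =>
    have hm : 0 ≤ min (auxw u n).1 (auxw u n).2 := le_min ih.1 ih.2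
    have h1 : 0 ≤ u (n+1) * min (auxw u n).1 (auxw u n).2 :=
      mul_nonneg (hu (n+1)).1 hm
    have h2 : u (n+1) * min (auxw u n).1 (auxw u n).2 ≤ (auxw u n).2 := by
      calc u (n+1) * min (auxw u n).1 (auxw u n).2 ≤ 1 * min (auxw u n).1 (auxw u n).2 :=
            mul_le_mul_of_nonneg_right (hu (n+1)).2 hm
      _ ≤ (auxw u n).2 := by rw [one_mul]; exact min_le_right _ _
    exact ⟨h1, by simp only [auxw]; linarith⟩

theorem auxw_antitone (n : ℕ) : (auxw u (n+1)).1 ≤ (auxw u n).1 := by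
  have ih := auxw_inv hu n
  have hm : 0 ≤ min (auxw u n).1 (auxw u n).2 := le_min ih.1 ih.2
  calc (auxw u (n+1)).1 = u (n+1) * min (auxw u n).1 (auxw u n).2 := rfl
  _ ≤ 1 * min (auxw u n).1 (auxw u n).2 := mul_le_mul_of_nonneg_right (hu (n+1)).2 hm
  _ ≤ (auxw u n).1 := by rw [one_mul]; exact min_le_left _ _

theorem auxw_anti : Antitone (fun n => (auxw u n).1) :=
  antitone_nat_of_succ_le (auxw_antitone hu)

theorem auxw_sum (n : ℕ) : ∑ k ∈ Finset.range (n+1), (auxw u k).1 = 1 - (auxw u n).2 := by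
  induction n with
  | zero => simp [auxw]
  | succ n ih =>
    rw [Finset.sum_range_succ, ih]
    show 1 - (auxw u n).2 + (auxw u (n+1)).1 = 1 - (auxw u (n+1)).2
    simp only [auxw]; ring

theorem auxw_partial_le (N : ℕ) : ∑ k ∈ Finset.range N, (auxw u k).1 ≤ 1 := by
  cases N with
  | zero => simp
  | succ n => rw [auxw_sum hu n]; linarith [(auxw_inv hu n).2]

theorem auxw_le_one (n : ℕ) : (auxw u n).1 ≤ 1 := by
  have h := auxw_partial_le hu (n+1)
  have : (auxw u n).1 ≤ ∑ k ∈ Finset.range (n+1), (auxw u k).1 := by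
    refine Finset.single_le_sum (fun k _ => (auxw_inv hu k).1) ?_
    simp
  linarith

theorem auxw_le_inv (N : ℕ) : (auxw u N).1 ≤ 1 / (N+1) := by
  have hsum : (N+1 : ℝ) * (auxw u N).1 ≤ 1 := by
    have h1 : ∀ k ∈ Finset.range (N+1), (auxw u N).1 ≤ (auxw u k).1 := by
      intro k hk
      exact auxw_anti hu (by simp at hk; omega : k ≤ N)
    calc (N+1 : ℝ) * (auxw u N).1 = ∑ _k ∈ Finset.range (N+1), (auxw u N).1 := by
          rw [Finset.sum_const, Finset.card_range]; push_cast; ring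
    _ ≤ ∑ k ∈ Finset.range (N+1), (auxw u k).1 := Finset.sum_le_sum h1
    _ ≤ 1 := auxw_partial_le hu (N+1)
  rw [le_div_iff₀ (by positivity : (0:ℝ) < (N:ℝ)+1)]
  linarith


end AuxW

theorem auxw_realize {v : ℕ → ℝ} (hv0 : ∀ n, 0 ≤ v n)
    (hva : ∀ n, v (n+1) ≤ v n)
    (hvs : ∀ N, ∑ k ∈ Finset.range N, v k ≤ 1) :
    ∃ u : ℕ → ℝ, (∀ n, 0 ≤ u n ∧ u n ≤ 1) ∧ ∀ n, (auxw u n).1 = v n := by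
  classical
  set T : ℕ → ℝ := fun N => 1 - ∑ k ∈ Finset.range N, v k with hT
  have hvT : ∀ n, v n ≤ T n := by
    intro n
    have := hvs (n+1)
    rw [Finset.sum_range_succ] at this
    simp only [hT]; linarith
  have hTs : ∀ n, T (n+1) = T n - v n := by
    intro n; simp only [hT, Finset.sum_range_succ]; ring
  set u : ℕ → ℝ := fun n => Nat.casesOn n (v 0)
    (fun m => if min (v m) (T (m+1)) = 0 then 0 else v (m+1) / min (v m) (T (m+1))) with hu
  have hu0 : u 0 = v 0 := rfl
  have husucc : ∀ m, u (m+1) =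
      if min (v m) (T (m+1)) = 0 then 0 else v (m+1) / min (v m) (T (m+1)) := fun m => rfl
  have hvm : ∀ m, v (m+1) ≤ min (v m) (T (m+1)) := by
    intro m; exact le_min (hva m) (hvT (m+1))
  have hurange : ∀ n, 0 ≤ u n ∧ u n ≤ 1 := by
    intro n
    cases n with
    | zero =>
      rw [hu0]
      refine ⟨hv0 0, ?_⟩
      have := hvs 1; simpa using this
    | succ m =>
      rw [husucc m]
      by_cases hc : min (v m) (T (m+1)) = 0
      · simp [hc]
      · rw [if_neg hc]
        have hmin0 : 0 ≤ min (v m) (T (m+1)) := le_trans (hv0 (m+1)) (hvm m)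
        have hminpos : 0 < min (v m) (T (m+1)) := lt_of_le_of_ne hmin0 (Ne.symm hc)
        constructor
        · exact div_nonneg (hv0 (m+1)) hmin0
        · rw [div_le_one hminpos]; exact hvm m
  refine ⟨u, hurange, ?_⟩
  have key : ∀ n, auxw u n = (v n, T (n+1)) := by
    intro n; induction n with
    | zero =>
      show (u 0, 1 - u 0) = (v 0, T 1)
      rw [hu0]
      have : T 1 = 1 - v 0 := by simp [hT]
      rw [this]
    | succ m ih =>
      have h1 : (auxw u (m+1)).1 = v (m+1) := by
        show u (m+1) * min (auxw u m).1 (auxw u m).2 = v (m+1)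
        rw [ih, husucc m]
        by_cases hc : min (v m) (T (m+1)) = 0
        · rw [if_pos hc]
          have : v (m+1) ≤ 0 := hc ▸ hvm m
          have := hv0 (m+1)
          simp; linarith
        · rw [if_neg hc]
          exact div_mul_cancel₀ _ hc
      have h2 : (auxw u (m+1)).2 = T (m+2) := by
        show (auxw u m).2 - u (m+1) * min (auxw u m).1 (auxw u m).2 = T (m+2)
        have h1' : u (m+1) * min (auxw u m).1 (auxw u m).2 = v (m+1) := h1
        rw [ih] at h1' ⊢
        simp only [h1']
        rw [hTs (m+1)]
      exact Prod.ext h1 h2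
  intro n; rw [key n]




variable {Γ : Type*}

/-- the predicate for picking a maximizer outside `L` -/
def PickP (y : Γ → ℝ) (L : List Γ) : Prop :=
  ∃ γ, (y γ ≠ 0 ∧ γ ∉ L) ∧ ∀ γ', y γ' ≠ 0 → γ' ∉ L → |y γ'| ≤ |y γ|

open Classical in
def next (y : Γ → ℝ) (L : List Γ) : Option Γ :=
  if h : PickP y L then some h.choose else none

def st (y : Γ → ℝ) : ℕ → List Γ
  | 0 => []
  | n+1 => (match next y (st y n) with
    | some γ => γ :: st y n
    | none => st y n)

def pickγ (y : Γ → ℝ) (n : ℕ) : Option Γ := next y (st y n)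

def wstar (y : Γ → ℝ) (n : ℕ) : ℝ := (pickγ y n).elim 0 (fun γ => |y γ|)

theorem next_spec {y : Γ → ℝ} {L : List Γ} {γ : Γ} (h : next y L = some γ) :
    (y γ ≠ 0 ∧ γ ∉ L) ∧ ∀ γ', y γ' ≠ 0 → γ' ∉ L → |y γ'| ≤ |y γ| := by
  classical
  unfold next at h
  split at h
  · rename_i hP
    cases h
    exact hP.choose_spec
  · exact absurd h (by simp)

theorem next_isSome {y : Γ → ℝ}
    (hF : ∀ ε, 0 < ε → {γ | ε ≤ |y γ|}.Finite)
    {L : List Γ} {γ₁ : Γ} (h1 : y γ₁ ≠ 0) (h2 : γ₁ ∉ L) :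
    ∃ γ, next y L = some γ := by
  classical
  have hP : PickP y L := by
    have hc : 0 < |y γ₁| := abs_pos.2 h1
    set B : Set Γ := {γ | (|y γ₁| ≤ |y γ|) ∧ y γ ≠ 0 ∧ γ ∉ L} with hB
    have hBfin : B.Finite := (hF _ hc).subset (fun γ hγ => hγ.1)
    have hBne : B.Nonempty := ⟨γ₁, le_rfl, h1, h2⟩
    obtain ⟨γm, hγm, hmax⟩ := Set.exists_max_image B (fun γ => |y γ|) hBfin hBne
    refine ⟨γm, ⟨hγm.2.1, hγm.2.2⟩, ?_⟩
    intro γ' h1' h2'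
    by_cases hcase : |y γ₁| ≤ |y γ'|
    · exact hmax γ' ⟨hcase, h1', h2'⟩
    · push_neg at hcase
      exact hcase.le.trans hγm.1
  unfold next
  rw [dif_pos hP]
  exact ⟨_, rfl⟩

theorem mem_st_iff {y : Γ → ℝ} : ∀ n (a : Γ), a ∈ st y n ↔ ∃ m < n, pickγ y m = some a := by
  intro n; induction n with
  | zero => simp [st]
  | succ n ih =>
    intro a
    show a ∈ (match next y (st y n) with
      | some γ => γ :: st y n
      | none => st y n) ↔ _
    rcases hc : next y (st y n) with _ | γ
    · simp only
      rw [ih a]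
      constructor
      · rintro ⟨m, hm, hp⟩; exact ⟨m, by omega, hp⟩
      · rintro ⟨m, hm, hp⟩
        refine ⟨m, ?_, hp⟩
        rcases Nat.lt_succ_iff_lt_or_eq.1 hm with h | h
        · exact h
        · subst h; rw [show pickγ y m = next y (st y m) from rfl] at hp
          rw [hp] at hc; cases hc
    · simp only [List.mem_cons]
      rw [ih a]
      constructor
      · rintro (rfl | ⟨m, hm, hp⟩)
        · exact ⟨n, Nat.lt_succ_self n, by rw [show pickγ y n = next y (st y n) from rfl, hc]⟩
        · exact ⟨m, by omega, hp⟩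
      · rintro ⟨m, hm, hp⟩
        rcases Nat.lt_succ_iff_lt_or_eq.1 hm with h | h
        · exact Or.inr ⟨m, h, hp⟩
        · subst h
          rw [show pickγ y m = next y (st y m) from rfl, hc] at hp
          cases hp; exact Or.inl rfl

theorem pick_injective {y : Γ → ℝ} {m n : ℕ} {γ : Γ}
    (hm : pickγ y m = some γ) (hn : pickγ y n = some γ) : m = n := by
  rcases lt_trichotomy m n with h | h | h
  · exfalso
    have h1 : γ ∈ st y n := (mem_st_iff n γ).2 ⟨m, h, hm⟩
    exact ((next_spec hn).1.2) h1
  · exact h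
  · exfalso
    have h1 : γ ∈ st y m := (mem_st_iff m γ).2 ⟨n, h, hn⟩
    exact ((next_spec hm).1.2) h1

theorem pick_none_succ {y : Γ → ℝ} {n : ℕ} (h : pickγ y n = none) :
    pickγ y (n+1) = none := by
  have hst : st y (n+1) = st y n := by
    show (match next y (st y n) with
      | some γ => γ :: st y n
      | none => st y n) = st y n
    rw [show next y (st y n) = none from h]
  show next y (st y (n+1)) = none
  rw [hst]; exact h

theorem wstar_anti {y : Γ → ℝ} : ∀ n, wstar y (n+1) ≤ wstar y n := by
  intro n
  rcases hc : pickγ y n with _ | γ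
  · rw [wstar, pick_none_succ hc, wstar, hc]
  · rcases hc' : pickγ y (n+1) with _ | γ'
    · rw [wstar, hc', wstar, hc]
      simp
    · rw [wstar, hc', wstar, hc]
      simp only [Option.elim]
      -- γ' is picked from st y (n+1) ⊇ st y n ∪ {γ}; use maximality of γ
      have hspec := next_spec (show next y (st y n) = some γ from hc)
      have hspec' := next_spec (show next y (st y (n+1)) = some γ' from hc')
      refine hspec.2 γ' hspec'.1.1 ?_
      intro hmem
      apply hspec'.1.2
      rw [mem_st_iff] at hmem ⊢
      obtain ⟨m, hm, hp⟩ := hmem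
      exact ⟨m, by omega, hp⟩

theorem wstar_nonneg (y : Γ → ℝ) (n : ℕ) : 0 ≤ wstar y n := by
  rcases hc : pickγ y n with _ | γ <;> simp [wstar, hc, abs_nonneg]

theorem st_nodup {y : Γ → ℝ} : ∀ n, (st y n).Nodup := by
  intro n; induction n with
  | zero => simp [st]
  | succ n ih =>
    show (match next y (st y n) with
      | some γ => γ :: st y n
      | none => st y n).Nodup
    rcases hc : next y (st y n) with _ | γ
    · exact ih
    · simp only [List.nodup_cons]
      exact ⟨(next_spec hc).1.2, ih⟩

open Classical in
theorem wstar_partial {y : Γ → ℝ}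
    (hfs : ∀ F : Finset Γ, ∑ γ ∈ F, |y γ| ≤ 1) (N : ℕ) :
    ∑ n ∈ Finset.range N, wstar y n ≤ 1 := by
  classical
  have key : ∀ N, ∑ n ∈ Finset.range N, wstar y n = ∑ γ ∈ (st y N).toFinset, |y γ| := by
    intro N; induction N with
    | zero => simp [st]
    | succ N ih =>
      rw [Finset.sum_range_succ, ih]
      rcases hc : pickγ y N with _ | γ
      · have hst : st y (N+1) = st y N := by
          show (match next y (st y N) with
            | some γ => γ :: st y N | none => st y N) = st y N
          rw [show next y (st y N) = none from hc]
        rw [hst, wstar, hc]; simp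
      · have hst : st y (N+1) = γ :: st y N := by
          show (match next y (st y N) with
            | some γ => γ :: st y N | none => st y N) = γ :: st y N
          rw [show next y (st y N) = some γ from hc]
        rw [hst, wstar, hc]
        have hγ : γ ∉ (st y N).toFinset := by
          simp only [List.mem_toFinset]
          exact (next_spec hc).1.2
        rw [List.toFinset_cons, Finset.sum_insert hγ]
        simp only [Option.elim]
        ring
  rw [key N]
  exact hfs _

theorem pick_covers {y : Γ → ℝ}
    (hF : ∀ ε, 0 < ε → {γ | ε ≤ |y γ|}.Finite)
    {γ : Γ} (hγ : y γ ≠ 0) : ∃ n, pickγ y n = some γ := by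
  classical
  by_contra hno
  push_neg at hno
  have hnotin : ∀ n, γ ∉ st y n := by
    intro n hmem
    obtain ⟨m, _, hp⟩ := (mem_st_iff n γ).1 hmem
    exact hno m hp
  have hsome : ∀ n, ∃ γn, pickγ y n = some γn := by
    intro n
    exact next_isSome hF hγ (hnotin n)
  set g : ℕ → Γ := fun n => (hsome n).choose with hg
  have hgp : ∀ n, pickγ y n = some (g n) := fun n => (hsome n).choose_spec
  have hginj : Function.Injective g := by
    intro m n hmn
    exact pick_injective (hgp m) (by rw [hmn]; exact hgp n)
  have hgval : ∀ n, |y γ| ≤ |y (g n)| := by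
    intro n
    exact (next_spec (hgp n)).2 γ hγ (hnotin n)
  have hfin : {γ' | |y γ| ≤ |y γ'|}.Finite := hF _ (abs_pos.2 hγ)
  exact (Set.infinite_of_injective_forall_mem hginj (fun n => hgval n)) hfin




/-! ### the core construction -/

def uval (x : XX Γ) (n : ℕ) : ℝ := binVal (x.2.2 n)

theorem uval_range (x : XX Γ) : ∀ n, 0 ≤ uval x n ∧ uval x n ≤ 1 :=
  fun n => ⟨binVal_nonneg _, binVal_le_one _⟩

def wv (x : XX Γ) (n : ℕ) : ℝ := (auxw (uval x) n).1

theorem wv_nonneg (x : XX Γ) (n : ℕ) : 0 ≤ wv x n := (auxw_inv (uval_range x) n).1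
theorem wv_le_one (x : XX Γ) (n : ℕ) : wv x n ≤ 1 := auxw_le_one (uval_range x) n
theorem wv_anti (x : XX Γ) : Antitone (wv x) := auxw_anti (uval_range x)
theorem wv_le_inv (x : XX Γ) (N : ℕ) : wv x N ≤ 1 / (N+1) := auxw_le_inv (uval_range x) N
theorem wv_partial (x : XX Γ) (N : ℕ) : ∑ n ∈ Finset.range N, wv x n ≤ 1 :=
  auxw_partial_le (uval_range x) N

theorem continuous_uval (n : ℕ) : Continuous (fun x : XX Γ => uval x n) :=
  continuous_binVal.comp ((continuous_apply n).comp (continuous_snd.comp continuous_snd))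

theorem continuous_auxw (n : ℕ) : Continuous (fun x : XX Γ => auxw (uval x) n) := by
  induction n with
  | zero =>
    exact (continuous_uval 0).prodMk (continuous_const.sub (continuous_uval 0))
  | succ n ih =>
    have h1 : Continuous (fun x : XX Γ => (auxw (uval x) n).1) := continuous_fst.comp ih
    have h2 : Continuous (fun x : XX Γ => (auxw (uval x) n).2) := continuous_snd.comp ih
    have hmin : Continuous (fun x : XX Γ =>
        min ((auxw (uval x) n).1) ((auxw (uval x) n).2)) := h1.min h2
    have hw : Continuous (fun x : XX Γ =>
        uval x (n+1) * min ((auxw (uval x) n).1) ((auxw (uval x) n).2)) :=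
      (continuous_uval (n+1)).mul hmin
    exact hw.prodMk (h2.sub hw)

theorem continuous_wv (n : ℕ) : Continuous (fun x : XX Γ => wv x n) :=
  continuous_fst.comp (continuous_auxw n)

theorem continuous_boolInd {α : Type*} [TopologicalSpace α] {g : α → Bool}
    (hg : Continuous g) (a b : ℝ) : Continuous (fun z => if g z = true then a else b) := by
  have h : (fun z => if g z = true then a else b) =
      (fun v : Bool => if v = true then a else b) ∘ g := rfl
  rw [h]
  exact Continuous.comp (continuous_of_discreteTopology) hg

theorem continuous_coord (n : ℕ) (γ : Γ) : Continuous (fun x : XX Γ => (x.1 n).1 γ) :=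
  (continuous_apply γ).comp (continuous_subtype_val.comp ((continuous_apply n).comp continuous_fst))

def indf (x : XX Γ) (n : ℕ) (γ : Γ) : ℝ :=
  (if (x.1 n).1 γ = true then (1:ℝ) else 0) *
    ∏ m ∈ Finset.range n, (if (x.1 m).1 γ = true then (0:ℝ) else 1)

theorem indf_eq (x : XX Γ) (n : ℕ) (γ : Γ) : indf x n γ =
    if ((x.1 n).1 γ = true ∧ ∀ m < n, (x.1 m).1 γ = false) then 1 else 0 := by
  classical
  unfold indf
  by_cases h1 : (x.1 n).1 γ = true
  · rw [if_pos h1]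
    by_cases h2 : ∀ m < n, (x.1 m).1 γ = false
    · rw [if_pos ⟨h1, h2⟩, one_mul]
      apply Finset.prod_eq_one
      intro m hm
      rw [if_neg]
      simp [h2 m (Finset.mem_range.1 hm)]
    · rw [if_neg (by tauto), one_mul]
      push_neg at h2
      obtain ⟨m, hm, hne⟩ := h2
      apply Finset.prod_eq_zero (Finset.mem_range.2 hm)
      rw [if_pos]
      revert hne
      cases (x.1 m).1 γ <;> simp
  · rw [if_neg h1, if_neg (by tauto), zero_mul]

theorem indf_nonneg (x : XX Γ) (n : ℕ) (γ : Γ) : 0 ≤ indf x n γ := by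
  rw [indf_eq]; split
  · exact zero_le_one
  · exact le_rfl

theorem indf_le_one (x : XX Γ) (n : ℕ) (γ : Γ) : indf x n γ ≤ 1 := by
  rw [indf_eq]; split
  · exact le_rfl
  · exact zero_le_one

theorem indf_ne_zero_iff {x : XX Γ} {n : ℕ} {γ : Γ} :
    indf x n γ ≠ 0 ↔ ((x.1 n).1 γ = true ∧ ∀ m < n, (x.1 m).1 γ = false) := by
  rw [indf_eq]
  split
  · rename_i h; simpa using h
  · rename_i h; simpa using h

theorem indf_unique_n {x : XX Γ} {γ : Γ} {m n : ℕ}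
    (hm : indf x m γ ≠ 0) (hn : indf x n γ ≠ 0) : m = n := by
  rw [indf_ne_zero_iff] at hm hn
  rcases lt_trichotomy m n with h | h | h
  · have := hn.2 m h
    rw [hm.1] at this; cases this
  · exact h
  · have := hm.2 n h
    rw [hn.1] at this; cases this

theorem indf_unique_γ {x : XX Γ} {n : ℕ} {γ γ' : Γ}
    (h : indf x n γ ≠ 0) (h' : indf x n γ' ≠ 0) : γ = γ' := by
  rw [indf_ne_zero_iff] at h h'
  have hcard := (x.1 n).2
  rw [Set.encard_le_one_iff] at hcard
  exact hcard γ γ' h.1 h'.1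

theorem continuous_indf (n : ℕ) (γ : Γ) : Continuous (fun x : XX Γ => indf x n γ) := by
  unfold indf
  refine Continuous.mul ?_ ?_
  · exact continuous_boolInd (continuous_coord n γ) 1 0
  · exact continuous_finset_prod _ (fun m _ => continuous_boolInd (continuous_coord m γ) 0 1)

def sgnv (x : XX Γ) (n : ℕ) : ℝ := if x.2.1 n = true then -1 else 1

theorem abs_sgnv (x : XX Γ) (n : ℕ) : |sgnv x n| = 1 := by
  unfold sgnv; split <;> simp

theorem continuous_sgnv (n : ℕ) : Continuous (fun x : XX Γ => sgnv x n) :=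
  continuous_boolInd ((continuous_apply n).comp (continuous_fst.comp continuous_snd)) (-1) 1

def tm (x : XX Γ) (n : ℕ) (γ : Γ) : ℝ := indf x n γ * (sgnv x n * wv x n)

theorem tm_abs (x : XX Γ) (n : ℕ) (γ : Γ) : |tm x n γ| = indf x n γ * wv x n := by
  unfold tm
  rw [abs_mul, abs_mul, abs_sgnv, one_mul,
    abs_of_nonneg (indf_nonneg x n γ), abs_of_nonneg (wv_nonneg x n)]

theorem tm_abs_le (x : XX Γ) (n : ℕ) (γ : Γ) : |tm x n γ| ≤ wv x n := by
  rw [tm_abs]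
  calc indf x n γ * wv x n ≤ 1 * wv x n :=
        mul_le_mul_of_nonneg_right (indf_le_one x n γ) (wv_nonneg x n)
  _ = wv x n := one_mul _

theorem tm_unique (x : XX Γ) (γ : Γ) :
    ∀ m n, tm x m γ ≠ 0 → tm x n γ ≠ 0 → m = n := by
  intro m n hm hn
  unfold tm at hm hn
  exact indf_unique_n (left_ne_zero_of_mul hm) (left_ne_zero_of_mul hn)

theorem tm_summable (x : XX Γ) (γ : Γ) : Summable (fun n => tm x n γ) :=
  summable_of_unique (tm_unique x γ)

theorem continuous_tm (n : ℕ) (γ : Γ) : Continuous (fun x : XX Γ => tm x n γ) :=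
  (continuous_indf n γ).mul ((continuous_sgnv n).mul (continuous_wv n))

def Fc (x : XX Γ) (γ : Γ) : ℝ := ∑' n, tm x n γ

theorem Fc_abs_le_one (x : XX Γ) (γ : Γ) : |Fc x γ| ≤ 1 :=
  abs_tsum_le_of_unique zero_le_one (tm_unique x γ)
    (fun n => (tm_abs_le x n γ).trans (wv_le_one x n))

theorem Fc_tail (x : XX Γ) (γ : Γ) (N : ℕ) :
    |Fc x γ - ∑ n ∈ Finset.range N, tm x n γ| ≤ 1 / (N+1) := by
  have h := (tm_summable x γ).sum_add_tsum_nat_add N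
  have htail : Fc x γ - ∑ n ∈ Finset.range N, tm x n γ = ∑' i, tm x (i + N) γ := by
    rw [Fc, ← h]; ring
  rw [htail]
  refine abs_tsum_le_of_unique (by positivity) ?_ ?_
  · intro i j hi hj
    have := tm_unique x γ _ _ hi hj
    omega
  · intro i
    calc |tm x (i + N) γ| ≤ wv x (i + N) := tm_abs_le x _ γ
    _ ≤ wv x N := wv_anti x (by omega)
    _ ≤ 1 / (N+1) := wv_le_inv x N

theorem continuous_Fc (γ : Γ) : Continuous (fun x : XX Γ => Fc x γ) := by
  refine TendstoUniformly.continuous (p := (Filter.atTop : Filter ℕ))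
    (F := fun N (x : XX Γ) => ∑ n ∈ Finset.range N, tm x n γ)
    ?_ (Filter.Eventually.of_forall (fun N =>
      continuous_finset_sum _ (fun n _ => continuous_tm n γ))).frequently
  rw [Metric.tendstoUniformly_iff]
  intro ε hε
  obtain ⟨N₀, hN₀⟩ := exists_nat_one_div_lt hε
  filter_upwards [Filter.eventually_ge_atTop N₀] with N hN x
  have h1 : (1:ℝ) / (N+1) ≤ 1 / (N₀+1) := by
    apply one_div_le_one_div_of_le
    · positivity
    · push_cast; have := (Nat.cast_le (α := ℝ)).2 hN; linarith
  calc dist (Fc x γ) (∑ n ∈ Finset.range N, tm x n γ)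
      = |Fc x γ - ∑ n ∈ Finset.range N, tm x n γ| := by rw [Real.dist_eq]
  _ ≤ 1 / (N+1) := Fc_tail x γ N
  _ ≤ 1 / (N₀+1) := h1
  _ < ε := hN₀

theorem indf_count (x : XX Γ) (n : ℕ) :
    ∑' γ, ENNReal.ofReal (indf x n γ) ≤ 1 := by
  by_cases hex : ∃ γ, indf x n γ ≠ 0
  · obtain ⟨γ₀, h₀⟩ := hex
    have h1 : ∑' γ, ENNReal.ofReal (indf x n γ) = ENNReal.ofReal (indf x n γ₀) := by
      refine tsum_eq_single γ₀ (fun γ' hne => ?_)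
      have hz : indf x n γ' = 0 := by
        by_contra h
        exact hne (indf_unique_γ h h₀)
      simp [hz]
    rw [h1]
    calc ENNReal.ofReal (indf x n γ₀) ≤ ENNReal.ofReal 1 :=
          ENNReal.ofReal_le_ofReal (indf_le_one x n γ₀)
    _ = 1 := ENNReal.ofReal_one
  · push_neg at hex
    have h1 : ∀ γ, ENNReal.ofReal (indf x n γ) = 0 := by
      intro γ; rw [hex γ]; simp
    rw [tsum_congr h1]
    simp

theorem Fc_tsum_le (x : XX Γ) : ∑' γ, ENNReal.ofReal |Fc x γ| ≤ 1 := by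
  have hpt : ∀ γ, ENNReal.ofReal |Fc x γ| ≤
      ∑' n, ENNReal.ofReal (indf x n γ * wv x n) := by
    intro γ
    rcases tsum_of_unique (tm_unique x γ) with h0 | ⟨n₀, hn₀⟩
    · have hz : Fc x γ = 0 := by
        rw [Fc]
        have hff : (fun n => tm x n γ) = fun _ => 0 := funext h0
        rw [hff, tsum_zero]
      simp [hz]
    · have hF : Fc x γ = tm x n₀ γ := hn₀
      rw [hF]
      calc ENNReal.ofReal |tm x n₀ γ| = ENNReal.ofReal (indf x n₀ γ * wv x n₀) := by
            rw [tm_abs]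
      _ ≤ ∑' n, ENNReal.ofReal (indf x n γ * wv x n) := ENNReal.le_tsum n₀
  calc ∑' γ, ENNReal.ofReal |Fc x γ|
      ≤ ∑' γ, ∑' n, ENNReal.ofReal (indf x n γ * wv x n) := ENNReal.tsum_le_tsum hpt
  _ = ∑' n, ∑' γ, ENNReal.ofReal (indf x n γ * wv x n) := ENNReal.tsum_comm
  _ ≤ ∑' n, ENNReal.ofReal (wv x n) := by
      refine ENNReal.tsum_le_tsum (fun n => ?_)
      have hsplit : ∀ γ : Γ, ENNReal.ofReal (indf x n γ * wv x n) =
          ENNReal.ofReal (indf x n γ) * ENNReal.ofReal (wv x n) :=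
        fun γ => ENNReal.ofReal_mul (indf_nonneg x n γ)
      calc ∑' γ, ENNReal.ofReal (indf x n γ * wv x n)
          = (∑' γ, ENNReal.ofReal (indf x n γ)) * ENNReal.ofReal (wv x n) := by
            rw [tsum_congr hsplit, ENNReal.tsum_mul_right]
      _ ≤ 1 * ENNReal.ofReal (wv x n) := mul_le_mul_left (indf_count x n) _
      _ = ENNReal.ofReal (wv x n) := one_mul _
  _ ≤ 1 := by
      rw [ENNReal.tsum_eq_iSup_sum]
      refine iSup_le (fun s => ?_)
      obtain ⟨N, hN⟩ := Finset.exists_nat_subset_range s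
      calc ∑ n ∈ s, ENNReal.ofReal (wv x n)
          ≤ ∑ n ∈ Finset.range N, ENNReal.ofReal (wv x n) :=
            Finset.sum_le_sum_of_subset hN
      _ = ENNReal.ofReal (∑ n ∈ Finset.range N, wv x n) :=
            (ENNReal.ofReal_sum_of_nonneg (fun n _ => wv_nonneg x n)).symm
      _ ≤ ENNReal.ofReal 1 := ENNReal.ofReal_le_ofReal (wv_partial x N)
      _ = 1 := ENNReal.ofReal_one

/-! ### surjectivity of the core map -/

open Classical in
def dirac (γ : Γ) : Sig Γ := ⟨fun γ' => decide (γ' = γ), by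
  classical
  have h : {γ' | (decide (γ' = γ) : Bool) = true} = {γ} := by
    ext γ'; simp
  rw [h, Set.encard_singleton]⟩

def emptySig : Sig Γ := ⟨fun _ => false, by simp⟩

theorem Fc_realize (y : Γ → ℝ)
    (hsum : ∑' γ, ENNReal.ofReal |y γ| ≤ 1) :
    ∃ x : XX Γ, ∀ γ, Fc x γ = y γ := by
  classical
  have hfs : ∀ F : Finset Γ, ∑ γ ∈ F, |y γ| ≤ 1 := by
    intro F
    have h1 : ENNReal.ofReal (∑ γ ∈ F, |y γ|) = ∑ γ ∈ F, ENNReal.ofReal |y γ| :=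
      ENNReal.ofReal_sum_of_nonneg (fun γ _ => abs_nonneg _)
    have h2 : ∑ γ ∈ F, ENNReal.ofReal |y γ| ≤ ∑' γ, ENNReal.ofReal |y γ| :=
      ENNReal.sum_le_tsum F
    have h3 : ENNReal.ofReal (∑ γ ∈ F, |y γ|) ≤ 1 := by
      rw [h1]; exact h2.trans hsum
    exact ENNReal.ofReal_le_one.1 h3
  have hF : ∀ ε, 0 < ε → {γ | ε ≤ |y γ|}.Finite := by
    intro ε hε
    by_contra hinf
    obtain ⟨F, hFsub, hFcard⟩ :=
      Set.Infinite.exists_subset_card_eq hinf (⌈1/ε⌉₊ + 1)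
    have hlow : (F.card : ℝ) * ε ≤ ∑ γ ∈ F, |y γ| := by
      calc (F.card : ℝ) * ε = ∑ _γ ∈ F, ε := by rw [Finset.sum_const]; simp [mul_comm]
      _ ≤ ∑ γ ∈ F, |y γ| := Finset.sum_le_sum (fun γ hγ => hFsub hγ)
    have hcard : (1:ℝ) < (F.card : ℝ) * ε := by
      rw [hFcard]; push_cast
      have hle : (1:ℝ)/ε ≤ (⌈1/ε⌉₊ : ℝ) := Nat.le_ceil _
      have h2 : (1/ε)*ε ≤ (⌈1/ε⌉₊ : ℝ)*ε := mul_le_mul_of_nonneg_right hle hε.le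
      have h3 : (1/ε)*ε = 1 := by field_simp
      linarith
    linarith [hfs F]
  set v : ℕ → ℝ := wstar y with hv
  have hv0 : ∀ n, 0 ≤ v n := wstar_nonneg y
  have hva : ∀ n, v (n+1) ≤ v n := wstar_anti
  have hvs : ∀ N, ∑ k ∈ Finset.range N, v k ≤ 1 := wstar_partial hfs
  obtain ⟨u, hurange, huw⟩ := auxw_realize hv0 hva hvs
  have hbits : ∀ n, ∃ c : ℕ → Bool, binVal c = u n :=
    fun n => binVal_surj (hurange n).1 (hurange n).2
  set bits : ℕ → ℕ → Bool := fun n => (hbits n).choose with hbitsdef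
  have hbitsval : ∀ n, binVal (bits n) = u n := fun n => (hbits n).choose_spec
  set U : ℕ → Sig Γ := fun n => (pickγ y n).elim emptySig (fun γ => dirac γ) with hU
  set sg : ℕ → Bool := fun n => (pickγ y n).elim false (fun γ => decide (y γ < 0)) with hsg
  set x : XX Γ := (U, sg, bits) with hx
  have hwv : ∀ n, wv x n = v n := by
    intro n
    have huu : uval x = u := funext (fun m => hbitsval m)
    rw [wv, huu]
    exact huw n
  have hUcoord : ∀ n γ, (U n).1 γ = true ↔ pickγ y n = some γ := by
    intro n γ
    rcases hc : pickγ y n with _ | γ₀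
    · simp [hU, hc, emptySig]
    · simp only [hU, hc, Option.elim, dirac]
      constructor
      · intro h
        have := of_decide_eq_true h
        rw [this]
      · intro h
        cases h
        simp
  refine ⟨x, fun γ => ?_⟩
  by_cases hγ : y γ = 0
  · have hz : ∀ n, tm x n γ = 0 := by
      intro n
      have hcoord : ¬ ((x.1 n).1 γ = true) := by
        show ¬ ((U n).1 γ = true)
        rw [hUcoord n γ]
        intro h
        exact (next_spec h).1.1 hγ
      have hind : indf x n γ = 0 := by
        rw [indf_eq, if_neg (by tauto)]
      rw [tm, hind, zero_mul]
    rw [Fc]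
    have hff : (fun n => tm x n γ) = fun _ => 0 := funext hz
    rw [hff, tsum_zero, hγ]
  · obtain ⟨n₀, hp⟩ := pick_covers hF hγ
    have hcoordiff : ∀ n, (x.1 n).1 γ = true ↔ n = n₀ := by
      intro n
      show (U n).1 γ = true ↔ n = n₀
      rw [hUcoord n γ]
      constructor
      · intro h; exact pick_injective h hp
      · intro h; rw [h]; exact hp
    have hind : indf x n₀ γ = 1 := by
      rw [indf_eq, if_pos]
      refine ⟨(hcoordiff n₀).2 rfl, fun m hm => ?_⟩
      have : ¬ ((x.1 m).1 γ = true) := by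
        rw [hcoordiff m]; omega
      revert this
      cases (x.1 m).1 γ <;> simp
    have hFc : Fc x γ = tm x n₀ γ := by
      refine tsum_eq_single n₀ (fun m hm => ?_)
      have hcm : ¬ ((x.1 m).1 γ = true) := by
        rw [hcoordiff m]; exact hm
      have hind0 : indf x m γ = 0 := by
        rw [indf_eq, if_neg (by tauto)]
      rw [tm, hind0, zero_mul]
    rw [hFc, tm, hind, one_mul, hwv n₀]
    have hvn : v n₀ = |y γ| := by
      simp [hv, wstar, hp]
    have hsgn : sgnv x n₀ = if y γ < 0 then -1 else 1 := by
      show (if sg n₀ = true then (-1:ℝ) else 1) = _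
      rw [hsg]
      simp only [hp, Option.elim]
      by_cases hneg : y γ < 0
      · rw [if_pos (by simpa using hneg), if_pos hneg]
      · rw [if_neg (by simpa using hneg), if_neg hneg]
    rw [hsgn, hvn]
    by_cases hneg : y γ < 0
    · rw [if_pos hneg, abs_of_neg hneg]; ring
    · rw [if_neg hneg, abs_of_nonneg (not_lt.1 hneg)]; ring

/-! ### repackaging -/

def repack (γ0 : Γ) (p : ℕ → Sig Γ) : XX Γ :=
  (fun n => p (2*n), fun n => (p (4*n+1)).1 γ0, fun n k => (p (4*(Nat.pair n k)+3)).1 γ0)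

theorem continuous_repack (γ0 : Γ) : Continuous (repack (Γ := Γ) γ0) := by
  refine Continuous.prodMk ?_ (Continuous.prodMk ?_ ?_)
  · exact continuous_pi (fun n => continuous_apply (2*n))
  · exact continuous_pi (fun n =>
      (continuous_apply γ0).comp (continuous_subtype_val.comp (continuous_apply (4*n+1))))
  · exact continuous_pi (fun n => continuous_pi (fun k =>
      (continuous_apply γ0).comp
        (continuous_subtype_val.comp (continuous_apply (4*(Nat.pair n k)+3)))))

theorem repack_surj (γ0 : Γ) : Function.Surjective (repack (Γ := Γ) γ0) := by
  classical
  rintro ⟨U, sg, bits⟩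
  set bs : Bool → Sig Γ := fun b => if b then dirac γ0 else emptySig with hbs0
  have hbs : ∀ b, (bs b).1 γ0 = b := by
    intro b; cases b
    · simp [hbs0, emptySig]
    · simp [hbs0, dirac]
  refine ⟨fun i => if i % 2 = 0 then U (i / 2) else
    (if i % 4 = 1 then bs (sg (i / 4))
     else bs (bits (Nat.unpair ((i-3)/4)).1 (Nat.unpair ((i-3)/4)).2)), ?_⟩
  refine Prod.ext ?_ (Prod.ext ?_ ?_)
  · funext n
    show (if (2*n) % 2 = 0 then U ((2*n) / 2) else _) = U n
    rw [if_pos (by omega)]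
    congr 1
    omega
  · funext n
    show (if (4*n+1) % 2 = 0 then _ else
      (if (4*n+1) % 4 = 1 then bs (sg ((4*n+1) / 4)) else _)).1 γ0 = sg n
    rw [if_neg (by omega), if_pos (by omega), show (4*n+1)/4 = n by omega, hbs]
  · funext n k
    show (if (4*(Nat.pair n k)+3) % 2 = 0 then _ else
      (if (4*(Nat.pair n k)+3) % 4 = 1 then _
       else bs (bits (Nat.unpair ((4*(Nat.pair n k)+3-3)/4)).1
         (Nat.unpair ((4*(Nat.pair n k)+3-3)/4)).2))).1 γ0 = bits n k
    rw [if_neg (by omega), if_neg (by omega),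
      show (4*(Nat.pair n k)+3-3)/4 = Nat.pair n k by omega, Nat.unpair_pair, hbs]


def bigF (γ0 : Γ) (q : ℕ → Sig Γ) :
    {y : Γ → ℝ // (∀ γ, |y γ| ≤ 1) ∧ ∑' γ, ENNReal.ofReal |y γ| ≤ 1} :=
  ⟨fun γ => Fc (repack γ0 q) γ, fun γ => Fc_abs_le_one _ γ, Fc_tsum_le _⟩

theorem continuous_bigF (γ0 : Γ) : Continuous (bigF (Γ := Γ) γ0) := by
  apply Continuous.subtype_mk
  exact continuous_pi (fun γ => (continuous_Fc γ).comp (continuous_repack γ0))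

theorem surjective_bigF (γ0 : Γ) : Function.Surjective (bigF (Γ := Γ) γ0) := by
  rintro ⟨y, hy1, hy2⟩
  obtain ⟨x, hx⟩ := Fc_realize y hy2
  obtain ⟨q, hq⟩ := repack_surj γ0 x
  exact ⟨q, Subtype.ext (funext (fun γ => by
    show Fc (repack γ0 q) γ = y γ
    rw [hq]; exact hx γ))⟩

end Stmt12

end Stmt12Aux

/-- For every set `Γ` and `1 < p < ∞`, the compact space
`B(Γ) = {x ∈ [-1,1]^Γ : ∑_γ |x_γ| ≤ 1}` (the unit ball of `ℓ_p(Γ)` in its weak topology)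
is a continuous image of `σ_1(Γ)^ℕ`. -/
theorem stmt12 (Γ : Type*) (p : ℝ≥0∞) (hp : 1 < p) (hp' : p ≠ ⊤) :
    ∃ f : (ℕ → {x : Γ → Bool // {γ | x γ = true}.encard ≤ 1}) →
          {y : Γ → ℝ // (∀ γ, |y γ| ≤ 1) ∧ ∑' γ, ENNReal.ofReal |y γ| ≤ 1},
      Continuous f ∧ Function.Surjective f := by
  classical
  rcases isEmpty_or_nonempty Γ with hΓ | hne
  · refine ⟨fun _ => ⟨fun _ => (0:ℝ), fun γ => by simp, by simp⟩, continuous_const, ?_⟩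
    rintro ⟨y, hy⟩
    refine ⟨fun _ => ⟨fun _ => false, by simp⟩, ?_⟩
    apply Subtype.ext
    funext γ
    exact (hΓ.false γ).elim
  · obtain ⟨γ0⟩ := hne
    exact ⟨Stmt12.bigF γ0, Stmt12.continuous_bigF γ0, Stmt12.surjective_bigF γ0⟩
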